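/- Let (G*, p̂) be the coned framework of a polytope one-skeleton as above, with Izmestiev stress Ω (exactly one negative eigenvalue, Ω_{n+1,n+1} < 0, ker Ω spanned by the d coordinate columns of p̂ together with the all-ones vector). Assume the stress-flex condition: for every infinitesimal flex p̂' of the bar framework, the (n+1)-st row of Ω p̂' is zero. Then every infinitesimal flex p̂' with tr(p̂'ᵀ Ω p̂') = 0 is an affine flex, i.e. there exist a d×d matrix A and t ∈ ℝ^d with p̂'_i = A p̂_i + t for all i. -/

import Mathlib

open Matrix

lemma mulVec_eigen_expand {m : ℕ} (Ω : Matrix (Fin m) (Fin m) ℝ) (hΩ : Ω.IsHermitian)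
    (z : EuclideanSpace ℝ (Fin m)) :
    Ω *ᵥ (z : Fin m → ℝ) =
      ∑ i, (hΩ.eigenvectorBasis.repr z i * hΩ.eigenvalues i) • ((hΩ.eigenvectorBasis i) : Fin m → ℝ) := by
  set B := hΩ.eigenvectorBasis with hB
  have hz0 : (z : Fin m → ℝ) = ∑ i, B.repr z i • (B i : Fin m → ℝ) := by
    have h1 := B.sum_repr z
    funext k
    conv_lhs => rw [← h1]
    simp [WithLp.ofLp_sum]
  conv_lhs => rw [hz0, ← Matrix.mulVecLin_apply, map_sum]
  congr 1; funext i
  rw [LinearMap.map_smul, Matrix.mulVecLin_apply, ← smul_smul]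
  exact congrArg _ (hΩ.mulVec_eigenvectorBasis i)

lemma quad_eigen {m : ℕ} (Ω : Matrix (Fin m) (Fin m) ℝ) (hΩ : Ω.IsHermitian)
    (y z : EuclideanSpace ℝ (Fin m)) :
    (y : Fin m → ℝ) ⬝ᵥ Ω *ᵥ (z : Fin m → ℝ) =
      ∑ i, hΩ.eigenvalues i * (hΩ.eigenvectorBasis.repr y i) * (hΩ.eigenvectorBasis.repr z i) := by
  set B := hΩ.eigenvectorBasis with hB
  rw [mulVec_eigen_expand Ω hΩ z]
  have dsum : (y : Fin m → ℝ) ⬝ᵥ (∑ i, (B.repr z i * hΩ.eigenvalues i) • (B i : Fin m → ℝ))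
      = ∑ i, (B.repr z i * hΩ.eigenvalues i) * ((y : Fin m → ℝ) ⬝ᵥ (B i : Fin m → ℝ)) := by
    simp only [dotProduct, Finset.sum_apply, Pi.smul_apply, PiLp.smul_apply, smul_eq_mul,
      Finset.mul_sum]
    rw [Finset.sum_comm]
    congr 1; funext i; congr 1; funext k; ring
  rw [dsum]
  congr 1; funext i
  have hy : (y : Fin m → ℝ) ⬝ᵥ (B i : Fin m → ℝ) = B.repr y i := by
    rw [B.repr_apply_apply]
    simp [dotProduct, PiLp.inner_apply, RCLike.inner_apply, mul_comm]
  rw [hy]; ring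

/-- PSD lemma: one negative eigenvalue, `e` negative direction, `x` Ω-orthogonal to `e`. -/
lemma psd_key {m : ℕ} (Ω : Matrix (Fin m) (Fin m) ℝ) (hΩ : Ω.IsHermitian)
    (hone : (Finset.univ.filter (fun i => hΩ.eigenvalues i < 0)).card = 1)
    (e : Fin m → ℝ) (he : e ⬝ᵥ Ω *ᵥ e < 0)
    (x : Fin m → ℝ) (hx : e ⬝ᵥ Ω *ᵥ x = 0) :
    0 ≤ x ⬝ᵥ Ω *ᵥ x ∧ (x ⬝ᵥ Ω *ᵥ x = 0 → Ω *ᵥ x = 0) := by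
  set B := hΩ.eigenvectorBasis with hB
  set μ := hΩ.eigenvalues with hμ
  obtain ⟨i₀, hi₀⟩ := Finset.card_eq_one.mp hone
  have hneg : μ i₀ < 0 := by
    have : i₀ ∈ Finset.univ.filter (fun i => μ i < 0) := by rw [hi₀]; simp
    simpa using this
  have hpos : ∀ i, i ≠ i₀ → 0 ≤ μ i := by
    intro i hi
    by_contra h
    push_neg at h
    have : i ∈ Finset.univ.filter (fun i => μ i < 0) := by simp [h]
    rw [hi₀] at this
    exact hi (Finset.mem_singleton.mp this)
  set c : Fin m → ℝ := fun i => B.repr (WithLp.toLp 2 x) i with hc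
  set dd : Fin m → ℝ := fun i => B.repr (WithLp.toLp 2 e) i with hdd
  have hE : e ⬝ᵥ Ω *ᵥ e = ∑ i, μ i * dd i * dd i := quad_eigen Ω hΩ (WithLp.toLp 2 e) (WithLp.toLp 2 e)
  have hX : e ⬝ᵥ Ω *ᵥ x = ∑ i, μ i * dd i * c i := quad_eigen Ω hΩ (WithLp.toLp 2 e) (WithLp.toLp 2 x)
  have hS : x ⬝ᵥ Ω *ᵥ x = ∑ i, μ i * c i * c i := quad_eigen Ω hΩ (WithLp.toLp 2 x) (WithLp.toLp 2 x)
  rw [hE] at he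
  rw [hX] at hx
  have hd₀ : dd i₀ ≠ 0 := by
    intro h0
    apply absurd he
    rw [not_lt]
    apply Finset.sum_nonneg
    intro i _
    rcases eq_or_ne i i₀ with rfl | hi
    · rw [h0]; ring_nf; exact le_refl 0
    · have := hpos i hi
      have := mul_self_nonneg (dd i)
      nlinarith
  set a : Fin m → ℝ := fun i => dd i₀ * c i - c i₀ * dd i with ha
  have hAnn : 0 ≤ ∑ i, μ i * a i * a i := by
    apply Finset.sum_nonneg
    intro i _
    rcases eq_or_ne i i₀ with rfl | hi
    · have : a i = 0 := by simp [ha]; ring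
      rw [this]; ring_nf; exact le_refl 0
    · have h1 := hpos i hi
      have h2 := mul_self_nonneg (a i)
      nlinarith
  have hkey : ∑ i, μ i * a i * a i =
      (dd i₀ * dd i₀) * (∑ i, μ i * c i * c i) + (c i₀ * c i₀) * (∑ i, μ i * dd i * dd i)
        - (2 * dd i₀ * c i₀) * (∑ i, μ i * dd i * c i) := by
    simp only [Finset.mul_sum]
    rw [← Finset.sum_add_distrib, ← Finset.sum_sub_distrib]
    exact Finset.sum_congr rfl fun i _ => by simp only [ha]; ring
  rw [hx, mul_zero, sub_zero] at hkey
  have hd2 : 0 < dd i₀ * dd i₀ := mul_self_pos.mpr hd₀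
  have hc2 : 0 ≤ c i₀ * c i₀ := mul_self_nonneg _
  constructor
  · rw [hS]
    by_contra h
    push_neg at h
    nlinarith
  · intro hzero
    rw [hS] at hzero
    rw [hzero, mul_zero, zero_add] at hkey
    have hc₀ : c i₀ = 0 := by
      rcases eq_or_ne (c i₀) 0 with h | h
      · exact h
      · exfalso
        have : 0 < c i₀ * c i₀ := mul_self_pos.mpr h
        nlinarith
    have hterm : ∀ i ∈ Finset.univ, μ i * c i * c i = 0 := by
      rw [← Finset.sum_eq_zero_iff_of_nonneg]
      · exact hzero
      · intro i _
        rcases eq_or_ne i i₀ with rfl | hi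
        · rw [hc₀]; ring_nf; exact le_refl 0
        · have h1 := hpos i hi
          have h2 := mul_self_nonneg (c i)
          nlinarith
    have hmc : ∀ i, c i * μ i = 0 := by
      intro i
      have := hterm i (Finset.mem_univ i)
      rcases mul_eq_zero.mp this with h | h
      · rw [mul_comm]; exact h
      · rw [h, zero_mul]
    rw [show Ω *ᵥ x = Ω *ᵥ (WithLp.toLp 2 x).ofLp from rfl, mulVec_eigen_expand Ω hΩ (WithLp.toLp 2 x)]
    apply Finset.sum_eq_zero
    intro i _
    rw [show B.repr (WithLp.toLp 2 x) i * μ i = c i * μ i from rfl, hmc i, zero_smul]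

/-- Let (G*, p̂) be the coned framework of a polytope one-skeleton,
with Izmestiev stress Ω (exactly one negative eigenvalue, Ω_{n+1,n+1} < 0,
ker Ω spanned by the d coordinate columns of p̂ together with the all-ones
vector).  Assume the stress-flex condition: for every infinitesimal flex p̂' of
the bar framework, the (n+1)-st row of Ω p̂' is zero.  Then every infinitesimal
flex p̂' with tr(p̂'ᵀ Ω p̂') = 0 is an affine flex, i.e. there exist a d×d
matrix A and t ∈ ℝ^d with p̂'_i = A p̂_i + t for all i. -/
theorem stmt_9 {n d : ℕ} (Gstar : SimpleGraph (Fin (n + 1)))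
    (phat : Matrix (Fin (n + 1)) (Fin d) ℝ)
    (Ω : Matrix (Fin (n + 1)) (Fin (n + 1)) ℝ)
    (hΩ : Ω.IsHermitian)
    (hsupp : ∀ i j : Fin (n + 1), i ≠ j → ¬Gstar.Adj i j → Ω i j = 0)
    (hone : (Finset.univ.filter (fun i => hΩ.eigenvalues i < 0)).card = 1)
    (hcorner : Ω (Fin.last n) (Fin.last n) < 0)
    (hker : LinearMap.ker Ω.mulVecLin =
      Submodule.span ℝ
        (insert (fun _ => (1 : ℝ))
          (Set.range fun j : Fin d => fun i : Fin (n + 1) => phat i j)))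
    (hstressflex : ∀ q : Matrix (Fin (n + 1)) (Fin d) ℝ,
      (∀ i i' : Fin (n + 1), Gstar.Adj i i' →
        (fun k => phat i k - phat i' k) ⬝ᵥ (fun k => q i k - q i' k) = 0) →
      ∀ j : Fin d, (Ω * q) (Fin.last n) j = 0)
    (p' : Matrix (Fin (n + 1)) (Fin d) ℝ)
    (hflex : ∀ i i' : Fin (n + 1), Gstar.Adj i i' →
      (fun k => phat i k - phat i' k) ⬝ᵥ (fun k => p' i k - p' i' k) = 0)
    (htr : Matrix.trace (p'ᵀ * Ω * p') = 0) :
    ∃ (A : Matrix (Fin d) (Fin d) ℝ) (t : Fin d → ℝ),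
      ∀ i : Fin (n + 1), (fun j => p' i j) = A.mulVec (fun j => phat i j) + t := by
  set e : Fin (n + 1) → ℝ := Pi.single (Fin.last n) 1 with hedef
  have he : e ⬝ᵥ Ω *ᵥ e < 0 := by
    simpa [hedef, single_dotProduct, Matrix.mulVec_single] using hcorner
  have hq : ∀ j : Fin d, e ⬝ᵥ Ω *ᵥ (fun i => p' i j) = 0 := by
    intro j
    have h := hstressflex p' hflex j
    rw [hedef, single_dotProduct, one_mul]
    simpa [Matrix.mulVec, dotProduct, Matrix.mul_apply] using h
  -- trace as sum of quadratic forms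
  have hdiag : ∀ j : Fin d, (p'ᵀ * Ω * p') j j = (fun i => p' i j) ⬝ᵥ Ω *ᵥ (fun i => p' i j) := by
    intro j
    simp only [Matrix.mul_apply, Matrix.transpose_apply, dotProduct, Matrix.mulVec,
      Finset.sum_mul, Finset.mul_sum]
    rw [Finset.sum_comm]
    exact Finset.sum_congr rfl fun k _ => Finset.sum_congr rfl fun i _ => by ring
  have htr' : ∑ j : Fin d, (fun i => p' i j) ⬝ᵥ Ω *ᵥ (fun i => p' i j) = 0 := by
    rw [← htr]
    simp only [Matrix.trace, Matrix.diag]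
    exact (Finset.sum_congr rfl fun j _ => (hdiag j).symm)
  have hzero : ∀ j : Fin d, Ω *ᵥ (fun i => p' i j) = 0 := by
    have hnn : ∀ j ∈ Finset.univ, (0:ℝ) ≤ (fun i => p' i j) ⬝ᵥ Ω *ᵥ (fun i => p' i j) :=
      fun j _ => (psd_key Ω hΩ hone e he _ (hq j)).1
    have heach := (Finset.sum_eq_zero_iff_of_nonneg hnn).mp htr'
    intro j
    exact (psd_key Ω hΩ hone e he _ (hq j)).2 (heach j (Finset.mem_univ j))
  have hrep : ∀ j : Fin d, ∃ t0 : ℝ, ∃ cf : Fin d → ℝ,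
      (fun i => p' i j) = t0 • (fun _ => (1:ℝ)) + ∑ k, cf k • (fun i => phat i k) := by
    intro j
    have hmem : (fun i => p' i j) ∈ LinearMap.ker Ω.mulVecLin := by
      rw [LinearMap.mem_ker, Matrix.mulVecLin_apply]
      exact hzero j
    rw [hker] at hmem
    rw [Submodule.mem_span_insert] at hmem
    obtain ⟨a, z, hz, heq⟩ := hmem
    rw [Submodule.mem_span_range_iff_exists_fun] at hz
    obtain ⟨cf, hcf⟩ := hz
    exact ⟨a, cf, by rw [heq, hcf]⟩
  choose t A hA using hrep
  refine ⟨Matrix.of (fun j k => A j k), t, fun i => ?_⟩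
  funext j
  have h := congrFun (hA j) i
  simp only [Pi.add_apply, Pi.smul_apply, smul_eq_mul, Finset.sum_apply] at h
  rw [h]
  simp only [Matrix.mulVec, dotProduct, Matrix.of_apply, Pi.add_apply]
  ring
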